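/- Let s_1,...,s_n be distinct complex numbers and set x_i(s) = s - s_i, ε_i = 1/Π_{j≠i}(s_i - s_j). Then the pseudo-companion matrix S whose first n-1 rows are [x_1, -x_2, 0,...], [x_1, 0, -x_3, ...], ..., [x_1, 0,...,0, -x_n] and whose last row is [ε_1,...,ε_n] is unimodular, i.e., det(S) = 1 (as a polynomial in s). -/

import Mathlib

open Finset Matrix Polynomial

noncomputable section

/-- The pseudo-companion matrix with complex entries. -/
def pcm (n : ℕ) (s ε : Fin (n + 1) → ℂ) (z : ℂ) :
    Matrix (Fin (n + 1)) (Fin (n + 1)) ℂ := fun i j =>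
  if (i : ℕ) < n then
    (if (j : ℕ) = 0 then z - s 0
     else if (j : ℕ) = (i : ℕ) + 1 then -(z - s j) else 0)
  else ε j

/-- Key determinant formula for `z` away from the nodes. -/
lemma pcm_det (n : ℕ) (s ε : Fin (n + 1) → ℂ) (z : ℂ) (hz : ∀ j, z - s j ≠ 0) :
    (pcm n s ε z).det = ∑ j, ε j * ∏ k ∈ Finset.univ.erase j, (z - s k) := by
  classical
  set c : ℂ := ∑ j, ε j * ((z - s 0) / (z - s j)) with hc
  -- the elimination matrix
  set T : Matrix (Fin (n + 1)) (Fin (n + 1)) ℂ :=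
    fun j k => if k = 0 then (z - s 0) / (z - s j) else if k = j then 1 else 0 with hT
  have hTtri : T.BlockTriangular OrderDual.toDual := by
    intro a b hab
    have h : a < b := hab
    have hb0 : b ≠ 0 := fun hh => by simp [hh] at h
    have hba : b ≠ a := (ne_of_gt h)
    simp [hT, hb0, hba]
  have hdetT : T.det = 1 := by
    rw [Matrix.det_of_lowerTriangular T hTtri]
    have : ∀ j : Fin (n + 1), T j j = 1 := by
      intro j
      by_cases h0 : j = 0
      · subst h0; simp [hT, div_self (hz 0)]
      · simp [hT, h0]
    simp [this]
  -- the product matrix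
  set M : Matrix (Fin (n + 1)) (Fin (n + 1)) ℂ :=
    fun i k => if k = 0 then (if (i : ℕ) < n then 0 else c) else pcm n s ε z i k with hM
  have hmul : pcm n s ε z * T = M := by
    ext i k
    rw [Matrix.mul_apply]
    by_cases hk0 : k = 0
    · subst hk0
      by_cases hi : (i : ℕ) < n
      · -- structural row: the column-0 entry vanishes
        set a : Fin (n + 1) := ⟨(i : ℕ) + 1, by omega⟩ with ha
        have h0a : (0 : Fin (n + 1)) ≠ a := by
          intro h
          have := congrArg Fin.val h
          simp [ha] at this
        have hsub : ∑ j, pcm n s ε z i j * T j 0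
            = ∑ j ∈ ({0, a} : Finset (Fin (n + 1))), pcm n s ε z i j * T j 0 := by
          refine (Finset.sum_subset (Finset.subset_univ _) ?_).symm
          intro x _ hx
          simp only [Finset.mem_insert, Finset.mem_singleton, not_or] at hx
          obtain ⟨hx0, hxa⟩ := hx
          have hx0' : (x : ℕ) ≠ 0 := fun h => hx0 (Fin.ext h)
          have hxa' : (x : ℕ) ≠ (i : ℕ) + 1 := fun h => hxa (Fin.ext (by simp [ha, h]))
          simp [pcm, hi, hx0', hxa']
        rw [hsub, Finset.sum_pair h0a]
        have hA : pcm n s ε z i 0 = z - s 0 := by simp [pcm, hi]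
        have hB : pcm n s ε z i a = -(z - s a) := by simp [pcm, hi, ha, h0a.symm]
        have hT0 : ∀ j : Fin (n + 1), T j 0 = (z - s 0) / (z - s j) := fun j => by simp [hT]
        have hM0 : M i 0 = 0 := by simp [hM, hi]
        have h1 : (z - s 0) * ((z - s 0) / (z - s 0)) = z - s 0 := by
          rw [div_self (hz 0), mul_one]
        have h2 : -(z - s a) * ((z - s 0) / (z - s a)) = -(z - s 0) := by
          rw [neg_mul, mul_comm, div_mul_cancel₀ _ (hz a)]
        rw [hA, hB, hT0, hT0, h1, h2, hM0]
        ring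
      · -- last row
        simp only [if_pos rfl, hM, if_pos rfl, if_neg hi, hc]
        refine Finset.sum_congr rfl fun j _ => ?_
        have : pcm n s ε z i j = ε j := by simp [pcm, hi]
        simp [this, hT]
    · -- other columns are unchanged
      have : ∀ j, pcm n s ε z i j * T j k = if k = j then pcm n s ε z i j else 0 := by
        intro j
        simp only [hT, if_neg hk0]
        by_cases h : k = j <;> simp [h]
      simp only [this]
      rw [Finset.sum_ite_eq univ k (fun j => pcm n s ε z i j)]
      simp [hM, hk0]
  -- compute det M through a row rotation making it upper triangular
  set σ : Equiv.Perm (Fin (n + 1)) := (finRotate (n + 1))⁻¹ with hσ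
  have hσ_apply : ∀ i : Fin (n + 1), finRotate (n + 1) (σ i) = i := fun i =>
    (finRotate (n + 1)).apply_symm_apply i
  set N : Matrix (Fin (n + 1)) (Fin (n + 1)) ℂ := fun i j => M (σ i) j with hN
  have hNtri : N.BlockTriangular id := by
    intro i j hji
    simp only [id] at hji
    set t := σ i with ht
    have hit : i = t + 1 := by rw [ht, ← finRotate_succ_apply, hσ_apply]
    have htn : (t : ℕ) < n := by
      rcases lt_or_eq_of_le (Nat.lt_succ_iff.mp t.isLt) with h | h
      · exact h
      · exfalso
        have : t = Fin.last n := Fin.ext h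
        rw [this] at hit
        have : i = 0 := by
          rw [hit]
          exact Fin.last_add_one n
        rw [this] at hji
        exact absurd hji (Fin.not_lt_zero j)
    have hival : (i : ℕ) = (t : ℕ) + 1 := by
      rw [hit, Fin.val_add_one_of_lt]
      rw [Fin.lt_def]
      simpa using htn
    have hj0 : (j : ℕ) ≠ 0 ∨ j = 0 := by
      by_cases h : j = 0
      · exact Or.inr h
      · exact Or.inl (fun hh => h (Fin.ext hh))
    simp only [hN, hM]
    rcases hj0 with hj | hj
    · have hj0' : j ≠ 0 := fun h => hj (by simp [h])
      have hjt : (j : ℕ) ≠ (t : ℕ) + 1 := by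
        intro h
        rw [← hival] at h
        exact absurd (Fin.ext h : j = i) (ne_of_lt hji)
      simp [hj0', pcm, htn, hj, hjt, ← ht]
    · subst hj
      simp [htn, ← ht]
  have hdetN : N.det = c * ∏ i : Fin n, (-(z - s i.succ)) := by
    rw [Matrix.det_of_upperTriangular hNtri]
    rw [Fin.prod_univ_succ]
    congr 1
    · -- N 0 0 = c
      have hσ0 : σ 0 = Fin.last n := by
        apply (finRotate (n + 1)).injective
        rw [hσ_apply, finRotate_succ_apply, Fin.last_add_one]
      simp [hN, hσ0, hM]
    · refine Finset.prod_congr rfl fun i _ => ?_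
      have hσi : σ i.succ = i.castSucc := by
        apply (finRotate (n + 1)).injective
        rw [hσ_apply, finRotate_succ_apply, Fin.coeSucc_eq_succ]
      simp only [hN, hσi, hM]
      have h1 : (i.succ : Fin (n + 1)) ≠ 0 := Fin.succ_ne_zero i
      have h2 : ((i.succ : Fin (n + 1)) : ℕ) ≠ 0 := fun h => h1 (Fin.ext h)
      have h3 : ((i.castSucc : Fin (n + 1)) : ℕ) < n := by simpa using i.isLt
      simp [h1, pcm, h3, h2, Fin.val_succ, Fin.coe_castSucc]
  have hdetM : M.det = c * ∏ i : Fin n, (z - s i.succ) := by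
    have hperm := Matrix.det_permute σ M
    have h1 : N.det = ((Equiv.Perm.sign σ : ℤ) : ℂ) * M.det := by
      rw [hN] at *
      exact_mod_cast hperm
    have hsign : ((Equiv.Perm.sign σ : ℤ) : ℂ) = (-1) ^ n := by
      rw [hσ, Equiv.Perm.sign_inv, sign_finRotate]
      simp
    have hprodneg : (∏ i : Fin n, (-(z - s i.succ))) = (-1 : ℂ) ^ n * ∏ i : Fin n, (z - s i.succ) := by
      rw [show (fun i : Fin n => -(z - s i.succ)) = fun i : Fin n => (-1) * (z - s i.succ) by
        funext i; ring]
      rw [Finset.prod_mul_distrib, Finset.prod_const]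
      simp
    rw [hdetN, hprodneg, hsign] at h1
    have h4 : (-1 : ℂ) ^ n * (-1 : ℂ) ^ n = 1 := by
      rw [← pow_add, ← two_mul, pow_mul]
      norm_num
    calc M.det = ((-1 : ℂ) ^ n * (-1 : ℂ) ^ n) * M.det := by rw [h4, one_mul]
    _ = (-1 : ℂ) ^ n * ((-1 : ℂ) ^ n * M.det) := by ring
    _ = (-1 : ℂ) ^ n * (c * ((-1 : ℂ) ^ n * ∏ i : Fin n, (z - s i.succ))) := by rw [← h1]
    _ = ((-1 : ℂ) ^ n * (-1 : ℂ) ^ n) * (c * ∏ i : Fin n, (z - s i.succ)) := by ring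
    _ = c * ∏ i : Fin n, (z - s i.succ) := by rw [h4, one_mul]
  -- put it together
  have hdet : (pcm n s ε z).det = c * ∏ i : Fin n, (z - s i.succ) := by
    have := congrArg Matrix.det hmul
    rw [Matrix.det_mul, hdetT, mul_one] at this
    rw [this, hdetM]
  rw [hdet, hc, Finset.sum_mul]
  refine Finset.sum_congr rfl fun j _ => ?_
  have hfull : ∏ k : Fin (n + 1), (z - s k) = (z - s j) * ∏ k ∈ Finset.univ.erase j, (z - s k) :=
    (Finset.mul_prod_erase univ _ (Finset.mem_univ j)).symm
  have hsplit : ∏ k : Fin (n + 1), (z - s k) = (z - s 0) * ∏ i : Fin n, (z - s i.succ) :=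
    Fin.prod_univ_succ _
  rw [mul_assoc, mul_comm, mul_comm (ε j)]
  congr 1
  rw [div_mul_eq_mul_div, ← hsplit, hfull]
  field_simp [hz j]

/-- Polynomial version of the pseudo-companion matrix. -/
def pcmP (n : ℕ) (s ε : Fin (n + 1) → ℂ) :
    Matrix (Fin (n + 1)) (Fin (n + 1)) (Polynomial ℂ) := fun i j =>
  if (i : ℕ) < n then
    (if (j : ℕ) = 0 then X - C (s 0)
     else if (j : ℕ) = (i : ℕ) + 1 then -(X - C (s j)) else 0)
  else C (ε j)

lemma pcmP_map (n : ℕ) (s ε : Fin (n + 1) → ℂ) (z : ℂ) :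
    (pcmP n s ε).map (eval z) = pcm n s ε z := by
  ext i j
  simp only [pcmP, pcm, Matrix.map_apply, apply_ite (eval z)]
  simp

lemma pcmP_det_eval (n : ℕ) (s ε : Fin (n + 1) → ℂ) (w : ℂ) :
    eval w (pcmP n s ε).det = (pcm n s ε w).det := by
  rw [← pcmP_map n s ε w]
  have h := RingHom.map_det (evalRingHom w) (pcmP n s ε)
  simpa [RingHom.mapMatrix_apply] using h

lemma pcmP_det (n : ℕ) (s ε : Fin (n + 1) → ℂ) (hs : Function.Injective s) :
    (pcmP n s ε).det
      = ∑ j, C (ε j) * ∏ k ∈ Finset.univ.erase j, (X - C (s k)) := by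
  have hroot : {x : ℂ | ((pcmP n s ε).det
      - ∑ j, C (ε j) * ∏ k ∈ Finset.univ.erase j, (X - C (s k))).IsRoot x}.Infinite := by
    apply Set.Infinite.mono (s := (Set.range s)ᶜ)
    · intro z hz
      have hz' : ∀ j, z - s j ≠ 0 := by
        intro j h
        exact hz ⟨j, (sub_eq_zero.mp h).symm⟩
      simp only [Set.mem_setOf_eq, Polynomial.IsRoot, eval_sub, sub_eq_zero]
      rw [pcmP_det_eval, pcm_det n s ε z hz']
      simp [eval_prod, eval_finset_sum]
    · apply Set.Finite.infinite_compl
      exact Set.finite_range s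
  have h := Polynomial.eq_zero_of_infinite_isRoot _ hroot
  exact sub_eq_zero.mp h

end

theorem pseudo_companion_unimodular (n : ℕ) (s : Fin (n + 1) → ℂ)
    (hs : Function.Injective s)
    (ε : Fin (n + 1) → ℂ)
    (hε : ∀ i, ε i = (∏ j ∈ Finset.univ.erase i, (s i - s j))⁻¹)
    (z : ℂ)
    (S : Matrix (Fin (n + 1)) (Fin (n + 1)) ℂ)
    (hS : ∀ i j : Fin (n + 1), S i j =
      if (i : ℕ) < n then
        (if (j : ℕ) = 0 then z - s 0
         else if (j : ℕ) = (i : ℕ) + 1 then -(z - s j) else 0)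
      else ε j) :
    S.det = 1 := by
  classical
  have hSp : S = pcm n s ε z := by
    ext i j
    rw [hS i j]
    rfl
  -- determinant formula valid for every z via polynomials
  have hdet : S.det = ∑ j, ε j * ∏ k ∈ Finset.univ.erase j, (z - s k) := by
    rw [hSp]
    rw [← pcmP_det_eval n s ε z, pcmP_det n s ε hs]
    simp [eval_prod, eval_finset_sum]
  rw [hdet]
  -- Lagrange interpolation: the basis polynomials sum to 1
  have hsum := Lagrange.sum_basis (v := s) (s := (univ : Finset (Fin (n + 1))))
    (hs.injOn) ⟨0, mem_univ 0⟩
  have hev := congrArg (eval z) hsum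
  rw [eval_finset_sum] at hev
  simp only [eval_one] at hev
  rw [← hev]
  refine Finset.sum_congr rfl fun j _ => ?_
  rw [Lagrange.basis, eval_prod]
  rw [hε j, ← Finset.prod_inv_distrib, ← Finset.prod_mul_distrib]
  refine Finset.prod_congr rfl fun k _ => ?_
  simp [Lagrange.basisDivisor]
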